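/- Multi-measurement DSMUR: Let {M_{a|x}}_{a=1}^d, for x = 1,…,n, be n POVMs on C^D, let c = (c_1,…,c_n) be a probability vector of weights, let ρ be a density matrix, and set p(a|x) = Tr(ρ M_{a|x}). For each k define S'_k = max over families of subsets I_x ⊆ {1,…,d} with Σ_x |I_x| = k of λ₁( Σ_x c_x Σ_{a∈I_x} M_{a|x} ). Then for every k, the sum of the k largest entries of the nd-dimensional concatenated vector ⊕_{x=1}^n c_x p_x (whose entries are c_x · p(a|x)) is at most S'_k. -/

import Mathlib

open scoped BigOperators ComplexOrder

open Matrix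

/-- Sum of the `k` largest entries of `x`: the maximum of `∑ i ∈ s, x i`
over all `k`-element index sets `s`. -/
noncomputable def kMaxSum {ι : Type*} [Fintype ι] (x : ι → ℝ) (k : ℕ) : ℝ :=
  sSup {t : ℝ | ∃ s : Finset ι, s.card = k ∧ t = ∑ i ∈ s, x i}

/-- The largest eigenvalue `λ₁(A)` of a (Hermitian) matrix `A`: the supremum of the real
points of its spectrum. -/
noncomputable def maxEig {D : ℕ} (A : Matrix (Fin D) (Fin D) ℂ) : ℝ :=
  sSup {t : ℝ | (t : ℂ) ∈ spectrum ℂ A}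

/-- `S'_k`: the maximum over families of subsets `I_x` with `Σ_x |I_x| = k` of the largest
eigenvalue of `Σ_x c_x Σ_{a∈I_x} M_{a|x}`. -/
noncomputable def Sval' {D d n : ℕ} (M : Fin n → Fin d → Matrix (Fin D) (Fin D) ℂ)
    (c : Fin n → ℝ) (k : ℕ) : ℝ :=
  sSup {t : ℝ | ∃ I : Fin n → Finset (Fin d), (∑ x, (I x).card) = k ∧
    t = maxEig (∑ x, ((c x : ℝ) : ℂ) • ∑ a ∈ I x, M x a)}


lemma spectrumSet_eq {D : ℕ} {A : Matrix (Fin D) (Fin D) ℂ} (hA : A.IsHermitian) :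
    {t : ℝ | (t : ℂ) ∈ spectrum ℂ A} = Set.range hA.eigenvalues := by
  ext t
  have : ((t : ℂ) ∈ spectrum ℂ A) ↔ t ∈ spectrum ℝ A := by
    rw [show ((t : ℂ)) = algebraMap ℝ ℂ t from rfl]
    exact spectrum.algebraMap_mem_iff ℂ
  rw [Set.mem_setOf_eq, this, hA.spectrum_real_eq_range_eigenvalues]

lemma eig_le_maxEig {D : ℕ} {A : Matrix (Fin D) (Fin D) ℂ} (hA : A.IsHermitian) (i : Fin D) :
    hA.eigenvalues i ≤ maxEig A := by
  rw [maxEig, spectrumSet_eq hA]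
  exact le_csSup (Set.finite_range _).bddAbove ⟨i, rfl⟩

lemma trace_le_maxEig {D : ℕ} {A ρ : Matrix (Fin D) (Fin D) ℂ} (hA : A.IsHermitian)
    (hρ : ρ.PosSemidef) (hρ1 : ρ.trace = 1) : ((ρ * A).trace).re ≤ maxEig A := by
  classical
  set U : Matrix (Fin D) (Fin D) ℂ := (hA.eigenvectorUnitary : Matrix (Fin D) (Fin D) ℂ) with hU
  set σ : Matrix (Fin D) (Fin D) ℂ := (Uᴴ * ρ * U) with hσdef
  have hσ : σ.PosSemidef := hρ.conjTranspose_mul_mul_same U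
  have hUU : U * Uᴴ = 1 := by
    have := (Matrix.mem_unitaryGroup_iff).mp hA.eigenvectorUnitary.2
    simpa [Matrix.star_eq_conjTranspose] using this
  have htrσ : σ.trace = 1 := by
    rw [hσdef, Matrix.trace_mul_cycle, hUU, Matrix.one_mul, hρ1]
  have key : (ρ * A).trace = ∑ i, σ i i * (hA.eigenvalues i : ℂ) := by
    conv_lhs => rw [hA.spectral_theorem, Unitary.conjStarAlgAut_apply]
    rw [show ρ * ((hA.eigenvectorUnitary : Matrix (Fin D) (Fin D) ℂ) *
        Matrix.diagonal (RCLike.ofReal ∘ hA.eigenvalues) * (star hA.eigenvectorUnitary :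
          Matrix (Fin D) (Fin D) ℂ)) =
        (ρ * U * Matrix.diagonal (RCLike.ofReal ∘ hA.eigenvalues)) * Uᴴ by
      simp [hU, Matrix.star_eq_conjTranspose, Matrix.mul_assoc]]
    rw [Matrix.trace_mul_comm, ← Matrix.mul_assoc, ← Matrix.mul_assoc, ← hσdef]
    simp [Matrix.trace, Matrix.diag, Matrix.mul_diagonal, Function.comp]
  have hre : ((ρ * A).trace).re = ∑ i, (σ i i).re * hA.eigenvalues i := by
    rw [key, Complex.re_sum]
    exact Finset.sum_congr rfl fun i _ => by simp [Complex.mul_re]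
  have hdiag : ∀ i, 0 ≤ (σ i i).re := by
    intro i
    have := hσ.re_dotProduct_nonneg (Pi.single i 1)
    simpa [dotProduct, Matrix.mulVec_single, Pi.single_apply] using this
  have hsum : ∑ i, (σ i i).re = 1 := by
    have h1 : (σ.trace).re = 1 := by rw [htrσ]; simp
    rw [← h1, Matrix.trace, Complex.re_sum]
    rfl
  rw [hre]
  calc ∑ i, (σ i i).re * hA.eigenvalues i
      ≤ ∑ i, (σ i i).re * maxEig A :=
        Finset.sum_le_sum fun i _ => mul_le_mul_of_nonneg_left (eig_le_maxEig hA i) (hdiag i)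
    _ = maxEig A := by rw [← Finset.sum_mul, hsum, one_mul]

/-- Multi-measurement DSMUR: for every `k`, the sum of the `k` largest entries of the
concatenated vector `⊕_x c_x p_x` (with entries `c_x · p(a|x)`) is at most `S'_k`. -/
theorem multi_measurement_dsmur {D d n : ℕ}
    (M : Fin n → Fin d → Matrix (Fin D) (Fin D) ℂ)
    (hMpos : ∀ x a, (M x a).PosSemidef) (hMsum : ∀ x, ∑ a, M x a = 1)
    (c : Fin n → ℝ) (hc0 : ∀ x, 0 ≤ c x) (hc1 : ∑ x, c x = 1)
    (ρ : Matrix (Fin D) (Fin D) ℂ) (hρ : ρ.PosSemidef) (hρ1 : ρ.trace = 1) :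
    ∀ k ≤ n * d,
      kMaxSum (fun xa : Fin n × Fin d => c xa.1 * ((ρ * M xa.1 xa.2).trace).re) k
        ≤ Sval' M c k := by
  classical
  intro k hk
  have hbdd : BddAbove {t : ℝ | ∃ I : Fin n → Finset (Fin d), (∑ x, (I x).card) = k ∧
      t = maxEig (∑ x, ((c x : ℝ) : ℂ) • ∑ a ∈ I x, M x a)} := by
    apply Set.Finite.bddAbove
    apply (Set.finite_range
      (fun I : Fin n → Finset (Fin d) => maxEig (∑ x, ((c x : ℝ) : ℂ) • ∑ a ∈ I x, M x a))).subset
    rintro t ⟨I, -, rfl⟩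
    exact ⟨I, rfl⟩
  obtain ⟨s₀, -, hs₀⟩ := Finset.exists_subset_card_eq (s := (Finset.univ : Finset (Fin n × Fin d))) (n := k)
    (by simpa using hk)
  rw [kMaxSum, Sval']
  refine csSup_le ⟨∑ i ∈ s₀, (fun xa : Fin n × Fin d => c xa.1 * ((ρ * M xa.1 xa.2).trace).re) i,
    ⟨s₀, hs₀, rfl⟩⟩ ?_
  rintro t ⟨s, hs, rfl⟩
  set I : Fin n → Finset (Fin d) := fun x => (s.filter (fun p => p.1 = x)).image Prod.snd with hI
  have hinj : ∀ x : Fin n, ∀ p ∈ s.filter (fun p => p.1 = x),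
      ∀ q ∈ s.filter (fun p => p.1 = x), p.2 = q.2 → p = q := by
    intro x p hp q hq h
    have hp1 := (Finset.mem_filter.mp hp).2
    have hq1 := (Finset.mem_filter.mp hq).2
    exact Prod.ext (hp1.trans hq1.symm) h
  have hcard : (∑ x, (I x).card) = k := by
    rw [← hs, Finset.card_eq_sum_card_fiberwise (f := Prod.fst) (t := Finset.univ)
      (fun p _ => Finset.mem_univ _)]
    exact Finset.sum_congr rfl fun x _ => Finset.card_image_of_injOn (hinj x)
  set O : Matrix (Fin D) (Fin D) ℂ := ∑ x, ((c x : ℝ) : ℂ) • ∑ a ∈ I x, M x a with hO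
  have hOh : O.IsHermitian := by
    show Oᴴ = O
    rw [hO, Matrix.conjTranspose_sum]
    refine Finset.sum_congr rfl fun x _ => ?_
    rw [Matrix.conjTranspose_smul, Matrix.conjTranspose_sum]
    simp [Complex.star_def, Complex.conj_ofReal]
    exact congrArg (fun m => c x • m) (Finset.sum_congr rfl fun a _ => (hMpos x a).1)
  have htr : ((ρ * O).trace).re
      = ∑ x, c x * ∑ a ∈ I x, ((ρ * M x a).trace).re := by
    rw [hO, Finset.mul_sum, Matrix.trace_sum, Complex.re_sum]
    refine Finset.sum_congr rfl fun x _ => ?_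
    rw [mul_smul_comm, Matrix.trace_smul, Finset.mul_sum, Matrix.trace_sum]
    simp [Complex.re_sum, Finset.mul_sum, Complex.mul_re]
  have hsplit : (∑ p ∈ s, c p.1 * ((ρ * M p.1 p.2).trace).re)
      = ∑ x, c x * ∑ a ∈ I x, ((ρ * M x a).trace).re := by
    rw [← Finset.sum_fiberwise_of_maps_to (g := Prod.fst) (t := Finset.univ)
      (fun p _ => Finset.mem_univ _)]
    refine Finset.sum_congr rfl fun x _ => ?_
    rw [Finset.mul_sum, hI, Finset.sum_image (hinj x)]
    refine Finset.sum_congr rfl fun p hp => ?_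
    rw [(Finset.mem_filter.mp hp).2]
  have hle : (∑ p ∈ s, c p.1 * ((ρ * M p.1 p.2).trace).re) ≤ maxEig O := by
    rw [hsplit, ← htr]
    exact trace_le_maxEig hOh hρ hρ1
  exact hle.trans (le_csSup hbdd ⟨I, hcard, rfl⟩)
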